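/- Strong monotonicity is properly more restrictive than monotonicity for bounded memory states learning with finitely many states: [TxtBMS*SMonEx] is a proper subset of [TxtBMS*MonEx]. -/

import Mathlib

/-!
Common framework: learning languages (c.e. subsets of ℕ) in the limit from texts,
by partial computable learners; iterative learners and bounded memory states (BMS)
learners; the usual learning restrictions.
-/

namespace BMSLearning

/-- Input alphabet `Σ = ℕ ∪ {#}`; `none` plays the role of the pause symbol `#`. -/
abbrev Sig : Type := Option ℕ

/-- Output alphabet `Ω = ℕ ∪ {?}`; `none` plays the role of `?`. -/
abbrev Hyp : Type := Option ℕ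

/-- A fixed acceptable programming system `φ`. -/
noncomputable def phi (p : ℕ) : ℕ →. ℕ :=
  Nat.Partrec.Code.eval (Denumerable.ofNat Nat.Partrec.Code p)

/-- `W p` is the domain of the `p`-th partial computable function. -/
noncomputable def W (p : ℕ) : Set ℕ := {x | (phi p x).Dom}

/-- A learner is a partial (computable) function from finite sequences over `Σ` to `Ω`. -/
abbrev Learner : Type := List Sig →. Hyp

/-- `T[t]`: the initial segment of length `t` of the text `T`. -/
def seg (T : ℕ → Sig) (t : ℕ) : List Sig := (List.range t).map T

/-- The content of a finite sequence. -/
def cnt (σ : List Sig) : Set ℕ := {x | some x ∈ σ}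

/-- The content of an infinite sequence. -/
def cntT (T : ℕ → Sig) : Set ℕ := {x | ∃ t, T t = some x}

/-- `T` is a text for `L`. -/
def IsTextFor (T : ℕ → Sig) (L : Set ℕ) : Prop := cntT T = L

/-- The learner `M` outputs the (proper) hypothesis `e ∈ ℕ` at time `t` on text `T`. -/
def outputs (M : Learner) (T : ℕ → Sig) (t : ℕ) (e : ℕ) : Prop :=
  M (seg T t) = Part.some (some e)

/-- `M` Ex-learns `L` from the text `T`: the learning sequence is defined, and from
some point on, a correct hypothesis is output and never changed (except possibly to `?`). -/
def Ex (M : Learner) (L : Set ℕ) (T : ℕ → Sig) : Prop :=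
  (∀ t, (M (seg T t)).Dom) ∧
  ∃ t₀ e, outputs M T t₀ e ∧ W e = L ∧
    ∀ t, t₀ ≤ t → ∀ h : Hyp, M (seg T t) = Part.some h → h ≠ none → h = some e

/-- `M` Ex-converges on the text `T` (syntactic convergence, no correctness demanded). -/
def ExConverges (M : Learner) (T : ℕ → Sig) : Prop :=
  ∃ t₀ h₀, M (seg T t₀) = Part.some h₀ ∧
    ∀ t, t₀ ≤ t → ∀ h : Hyp, M (seg T t) = Part.some h → h ≠ none → h = h₀

/-- The iterated state function `s*` of a BMS learner with state transition function `sf`: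
`s*(ε) = 0` and `s*(σ⌢x) = sf(s*(σ), x)`. -/
def sStar (sf : ℕ × Sig →. ℕ) (σ : List Sig) : Part ℕ :=
  σ.foldl (fun q x => q.bind fun a => sf (a, x)) (Part.some 0)

/-- The learner determined by a hypothesis generating function `hf` and a state
transition function `sf`:  `M(ε) = ?` and `M(σ⌢x) = hf(s*(σ), x)`. -/
noncomputable def bmsLearner (hf : ℕ × Sig →. Hyp) (sf : ℕ × Sig →. ℕ) : Learner :=
  fun τ =>
    if hτ : τ = [] then Part.some (none : Hyp)
    else (sStar sf τ.dropLast).bind fun q => hf (q, τ.getLast hτ)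

/-- `(hf, sf)` is an admissible presentation of a BMS learner: both functions are
partial computable and they have equal domains. -/
def BMSPair (hf : ℕ × Sig →. Hyp) (sf : ℕ × Sig →. ℕ) : Prop :=
  Partrec hf ∧ Partrec sf ∧ ∀ p : ℕ × Sig, (hf p).Dom ↔ (sf p).Dom

/-- `BMS*`: the BMS learner with state transition function `sf` uses only finitely
many states on the text `T`. -/
def StatesFin (sf : ℕ × Sig →. ℕ) (T : ℕ → Sig) : Prop :=
  {q : ℕ | ∃ t, sStar sf (seg T t) = Part.some q}.Finite

/-- The iterative learner determined by the hypothesis generating function `hf`: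
`M(ε) = ?` and `M(σ⌢x) = hf(M(σ), x)`. -/
def itLearner (hf : Hyp × Sig →. Hyp) : Learner :=
  fun τ => τ.foldl (fun q x => q.bind fun a => hf (a, x)) (Part.some (none : Hyp))

/-- `[TxtBMS*δEx]`: the classes of languages Ex-learnable from texts under the
restriction `δ` by a BMS learner using finitely many states on each text
for a language of the class. -/
def TxtBMSstarEx (δ : Learner → (ℕ → Sig) → Prop) : Set (Set (Set ℕ)) :=
  {ℒ | ∃ hf sf, BMSPair hf sf ∧
      ∀ L ∈ ℒ, ∀ T, IsTextFor T L →
        Ex (bmsLearner hf sf) L T ∧ StatesFin sf T ∧ δ (bmsLearner hf sf) T}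

/-- `[ItTxtδEx]`: the classes of languages Ex-learnable from texts under the
restriction `δ` by an iterative learner. -/
def ItTxtEx (δ : Learner → (ℕ → Sig) → Prop) : Set (Set (Set ℕ)) :=
  {ℒ | ∃ hf, Partrec hf ∧
      ∀ L ∈ ℒ, ∀ T, IsTextFor T L → Ex (itLearner hf) L T ∧ δ (itLearner hf) T}

/-! ### Learning restrictions -/

/-- The trivial restriction `T`. -/
def Triv : Learner → (ℕ → Sig) → Prop := fun _ _ => True

/-- Conservative. -/
def Conv (M : Learner) (T : ℕ → Sig) : Prop :=
  ∀ s t, s ≤ t → ∀ es et : ℕ, outputs M T s es → outputs M T t et →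
    cnt (seg T t) ⊆ W es → es = et

/-- Decisive. -/
def Dec (M : Learner) (T : ℕ → Sig) : Prop :=
  ∀ r s t, r ≤ s → s ≤ t → ∀ er es et : ℕ,
    outputs M T r er → outputs M T s es → outputs M T t et →
    W er = W et → W er = W es

/-- Cautious. -/
def Caut (M : Learner) (T : ℕ → Sig) : Prop :=
  ∀ s t, s ≤ t → ∀ es et : ℕ, outputs M T s es → outputs M T t et →
    ¬ (W et ⊂ W es)

/-- Weakly monotonic. -/
def WMon (M : Learner) (T : ℕ → Sig) : Prop :=
  ∀ s t, s ≤ t → ∀ es et : ℕ, outputs M T s es → outputs M T t et →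
    cnt (seg T t) ⊆ W es → W es ⊆ W et

/-- Monotonic. -/
def Mon (M : Learner) (T : ℕ → Sig) : Prop :=
  ∀ s t, s ≤ t → ∀ es et : ℕ, outputs M T s es → outputs M T t et →
    W es ∩ cntT T ⊆ W et ∩ cntT T

/-- Strongly monotonic. -/
def SMon (M : Learner) (T : ℕ → Sig) : Prop :=
  ∀ s t, s ≤ t → ∀ es et : ℕ, outputs M T s es → outputs M T t et →
    W es ⊆ W et

/-- Non-U-shaped. -/
def NU (M : Learner) (T : ℕ → Sig) : Prop :=
  ∀ r s t, r ≤ s → s ≤ t → ∀ er es et : ℕ,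
    outputs M T r er → outputs M T s es → outputs M T t et →
    W er = cntT T → W et = cntT T → W er = W es

/-- Strongly non-U-shaped. -/
def SNU (M : Learner) (T : ℕ → Sig) : Prop :=
  ∀ r s t, r ≤ s → s ≤ t → ∀ er et : ℕ,
    outputs M T r er → outputs M T t et →
    W er = cntT T → W et = cntT T → M (seg T s) = Part.some (some er)

/-- Strongly decisive. -/
def SDec (M : Learner) (T : ℕ → Sig) : Prop :=
  ∀ r s t, r ≤ s → s ≤ t → ∀ er et : ℕ,
    outputs M T r er → outputs M T t et →
    W er = W et → M (seg T s) = Part.some (some er)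

/-- Witness-based. -/
def Wb (M : Learner) (T : ℕ → Sig) : Prop :=
  ∀ r s t, r < s → s ≤ t → ∀ er et : ℕ,
    outputs M T r er → outputs M T t et →
    M (seg T s) ≠ Part.some (some er) →
    (cnt (seg T s) ∩ (W et \ W er)).Nonempty

/-- A predicate on (learner, text) pairs allows for simulation on equivalent text. -/
def AFSOET (δ : Learner → (ℕ → Sig) → Prop) : Prop :=
  ∀ simu : ℕ → ℕ, Monotone simu → (∀ x, ∃ t, x ≤ simu t) →
    ∀ M M' : Learner, Partrec M → Partrec M' →
      ∀ T T' : ℕ → Sig,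
        (∀ t, cnt (seg T' t) = cnt (seg T (simu t))) →
        (∀ t, M' (seg T' t) = M (seg T (simu t))) →
        δ M T → δ M' T'

/-- The hypotheses (partial values in `Ω`) `h` and `h'` are semantically equal:
both undefined, both `?`, or both proper hypotheses describing the same language. -/
def SemEqAt (h h' : Part Hyp) : Prop :=
  (h.Dom ↔ h'.Dom) ∧ (h = Part.some (none : Hyp) ↔ h' = Part.some (none : Hyp)) ∧
  ∀ e e' : ℕ, h = Part.some (some e) → h' = Part.some (some e') → W e = W e'

/-- A restriction is semantic: it depends only on the text and the sequence of sets
described by the hypotheses. -/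
def Semantic (δ : Learner → (ℕ → Sig) → Prop) : Prop :=
  ∀ M M' : Learner, Partrec M → Partrec M' → ∀ T : ℕ → Sig,
    (∀ t, SemEqAt (M (seg T t)) (M' (seg T t))) → δ M T → δ M' T

/-- `σ` is a locking sequence for `M` on `L`. -/
def LockingSeq (M : Learner) (L : Set ℕ) (σ : List Sig) : Prop :=
  cnt σ ⊆ L ∧ (∃ e : ℕ, M σ = Part.some (some e) ∧ W e = L) ∧
    ∀ τ : List Sig, cnt τ ⊆ L → M (σ ++ τ) = M σ

/-- `M` is strongly locking on `L`. -/
def StronglyLocking (M : Learner) (L : Set ℕ) : Prop :=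
  ∀ T, IsTextFor T L → ∃ t, LockingSeq M L (seg T t)

/-- The fixed computable bijection `π : ℕ → Ω` with `π 0 = ?` and `π (i+1) = i`. -/
def piFun : ℕ → Hyp
  | 0 => none
  | (i + 1) => some i

/-- The inverse `π⁻¹ : Ω → ℕ` of `piFun`. -/
def piInv : Hyp → ℕ
  | none => 0
  | some e => e + 1

end BMSLearning

namespace BMSLearning

/-! ### Separating class: evens and the languages `{0,2,...,2k} ∪ {2k+1}` -/

def P (k x : ℕ) : Prop :=
  (k = 0 ∧ x % 2 = 0) ∨ (¬k = 0 ∧ ((x % 2 = 0 ∧ x ≤ 2 * (k - 1)) ∨ x = 2 * (k - 1) + 1))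

instance : ∀ k x, Decidable (P k x) := fun _ _ => by unfold P; infer_instance

def Lang (k : ℕ) : Set ℕ := {x | P k x}

lemma primrecPred_P : PrimrecPred fun p : ℕ × ℕ => P p.1 p.2 := by
  have e0 : PrimrecPred fun p : ℕ × ℕ => p.1 = 0 :=
    PrimrecRel.comp Primrec.eq Primrec.fst (Primrec.const 0)
  have even2 : PrimrecPred fun p : ℕ × ℕ => p.2 % 2 = 0 :=
    PrimrecRel.comp Primrec.eq
      (Primrec₂.comp Primrec.nat_mod Primrec.snd (Primrec.const 2)) (Primrec.const 0)
  have hb : Primrec fun p : ℕ × ℕ => 2 * (p.1 - 1) :=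
    Primrec₂.comp Primrec.nat_mul (Primrec.const 2)
      (Primrec₂.comp Primrec.nat_sub Primrec.fst (Primrec.const 1))
  have hle : PrimrecPred fun p : ℕ × ℕ => p.2 ≤ 2 * (p.1 - 1) :=
    PrimrecRel.comp Primrec.nat_le Primrec.snd hb
  have heq1 : PrimrecPred fun p : ℕ × ℕ => p.2 = 2 * (p.1 - 1) + 1 :=
    PrimrecRel.comp Primrec.eq Primrec.snd (Primrec.succ.comp hb)
  exact (e0.and even2).or (e0.not.and ((even2.and hle).or heq1))

def G : ℕ →. ℕ := fun n => bif decide (P n.unpair.1 n.unpair.2) then Part.some 0 else Part.none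

lemma partrec_G : Nat.Partrec G := by
  rw [← Partrec.nat_iff]
  exact Partrec.cond ((primrecPred_P.comp Primrec.unpair).decide.to_comp)
    (Partrec.const' (Part.some 0)) Partrec.none

noncomputable def cG : Nat.Partrec.Code := (Nat.Partrec.Code.exists_code.mp partrec_G).choose

lemma eval_cG : cG.eval = G := (Nat.Partrec.Code.exists_code.mp partrec_G).choose_spec

noncomputable def idx (k : ℕ) : ℕ := Encodable.encode (cG.curry k)

lemma primrec_idx : Primrec idx :=
  Primrec.encode.comp (Primrec₂.comp Nat.Partrec.Code.primrec₂_curry (Primrec.const cG) Primrec.id)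

lemma W_idx (k : ℕ) : W (idx k) = Lang k := by
  ext x
  have h1 : phi (idx k) x = cG.eval (Nat.pair k x) := by
    unfold phi idx
    rw [Denumerable.ofNat_encode, Nat.Partrec.Code.eval_curry]
  simp only [W, Set.mem_setOf_eq, h1, eval_cG]
  unfold G
  rw [Nat.unpair_pair]
  by_cases h : P k x <;> simp [h, Lang]

lemma idx_injW {k k' : ℕ} (h : idx k = idx k') : Lang k = Lang k' := by
  rw [← W_idx, ← W_idx, h]

/-! ### The learner -/

def st (q : ℕ) (x : Sig) : ℕ :=
  if q = 0 then Option.casesOn (motive := fun _ => ℕ) x 0 (fun n => if n % 2 = 1 then n / 2 + 1 else 0) else q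

lemma primrec_st : Primrec fun p : ℕ × Sig => st p.1 p.2 := by
  have hinner : Primrec fun x : Sig =>
      Option.casesOn (motive := fun _ => ℕ) x 0 (fun n => if n % 2 = 1 then n / 2 + 1 else 0) := by
    refine Primrec.option_casesOn Primrec.id (Primrec.const 0) ?_
    have : PrimrecPred fun p : Sig × ℕ => p.2 % 2 = 1 :=
      PrimrecRel.comp Primrec.eq
        (Primrec₂.comp Primrec.nat_mod Primrec.snd (Primrec.const 2)) (Primrec.const 1)
    exact Primrec.ite this
      (Primrec.succ.comp (Primrec₂.comp Primrec.nat_div Primrec.snd (Primrec.const 2)))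
      (Primrec.const 0)
  exact Primrec.ite (PrimrecRel.comp Primrec.eq Primrec.fst (Primrec.const 0))
    (hinner.comp Primrec.snd) Primrec.fst

noncomputable def hfD : ℕ × Sig →. Hyp := fun p => Part.some (some (idx (st p.1 p.2)))

def sfD : ℕ × Sig →. ℕ := fun p => Part.some (st p.1 p.2)

lemma partrec_hfD : Partrec hfD :=
  (Computable.option_some.comp ((primrec_idx.comp primrec_st).to_comp) : _)

lemma partrec_sfD : Partrec sfD := (primrec_st.to_comp : _)

/-! ### Computing the learner on segments -/

def Sfun (T : ℕ → Sig) : ℕ → ℕ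
  | 0 => 0
  | (t + 1) => st (Sfun T t) (T t)

lemma seg_succ (T : ℕ → Sig) (t : ℕ) : seg T (t + 1) = seg T t ++ [T t] := by
  simp [seg, List.range_succ]

lemma foldl_sfD : ∀ (σ : List Sig) (a : ℕ),
    σ.foldl (fun q x => q.bind fun a => sfD (a, x)) (Part.some a) = Part.some (σ.foldl st a) := by
  intro σ
  induction σ with
  | nil => intro a; rfl
  | cons x σ ih =>
    intro a
    simpa [sfD] using ih (st a x)

lemma sStar_sfD (σ : List Sig) : sStar sfD σ = Part.some (σ.foldl st 0) := foldl_sfD σ 0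

lemma foldl_seg (T : ℕ → Sig) (t : ℕ) : (seg T t).foldl st 0 = Sfun T t := by
  induction t with
  | zero => rfl
  | succ t ih => rw [seg_succ, List.foldl_append, ih]; rfl

lemma M_zero (T : ℕ → Sig) : bmsLearner hfD sfD (seg T 0) = Part.some none := by
  simp [bmsLearner, seg]

lemma M_concat (σ : List Sig) (x : Sig) :
    bmsLearner hfD sfD (σ ++ [x]) = Part.some (some (idx (st (σ.foldl st 0) x))) := by
  have hne : σ ++ [x] ≠ [] := by simp
  rw [bmsLearner, dif_neg hne, List.dropLast_concat, sStar_sfD]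
  simp [hfD, List.getLast_concat]

lemma M_succ (T : ℕ → Sig) (t : ℕ) :
    bmsLearner hfD sfD (seg T (t + 1)) = Part.some (some (idx (Sfun T (t + 1)))) := by
  rw [seg_succ, M_concat, foldl_seg]
  rfl

end BMSLearning
namespace BMSLearning

lemma mem_Mon : Set.range Lang ∈ TxtBMSstarEx Mon := by
  refine ⟨hfD, sfD, ⟨partrec_hfD, partrec_sfD, fun p => Iff.rfl⟩, ?_⟩
  rintro L ⟨k, rfl⟩ T hT
  have hmemT : ∀ t n, T t = some n → P k n := by
    intro t n h
    have : n ∈ cntT T := ⟨t, h⟩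
    rwa [hT] at this
  have hdom : ∀ t, (bmsLearner hfD sfD (seg T t)).Dom := by
    intro t
    cases t with
    | zero => rw [M_zero]; trivial
    | succ t => rw [M_succ]; trivial
  cases k with
  | zero =>
    have hS : ∀ t, Sfun T t = 0 := by
      intro t
      induction t with
      | zero => rfl
      | succ t ih =>
        show st (Sfun T t) (T t) = 0
        rw [ih]
        cases hx : T t with
        | none => rfl
        | some n =>
          have hp := hmemT t n hx
          have hn : n % 2 = 0 := by
            rcases hp with ⟨-, h⟩ | ⟨h0, -⟩
            · exact h
            · exact absurd (by trivial) h0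
          simp [st, hn]
    refine ⟨⟨hdom, 1, idx 0, ?_, W_idx 0, ?_⟩, ?_, ?_⟩
    · show bmsLearner hfD sfD (seg T 1) = Part.some (some (idx 0))
      rw [M_succ, hS]
    · intro t ht h hMh _
      obtain ⟨t', rfl⟩ : ∃ t', t = t' + 1 := ⟨t - 1, by omega⟩
      rw [M_succ, hS] at hMh
      exact (Part.some_inj.mp hMh).symm
    · apply Set.Finite.subset (Set.finite_singleton 0)
      rintro q ⟨t, hq⟩
      rw [sStar_sfD, foldl_seg, hS] at hq
      exact (Part.some_inj.mp hq).symm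
    · intro s t hst es et hs ht
      simp only [outputs] at hs ht
      cases s with
      | zero =>
        rw [M_zero] at hs
        exact absurd (Part.some_inj.mp hs) (by simp)
      | succ a =>
        cases t with
        | zero => omega
        | succ b =>
          rw [M_succ] at hs ht
          have hes : es = idx (Sfun T (a + 1)) := (Option.some_inj.mp (Part.some_inj.mp hs)).symm
          have het : et = idx (Sfun T (b + 1)) := (Option.some_inj.mp (Part.some_inj.mp ht)).symm
          rw [hes, het, hS, hS]
  | succ j =>
    have hS : ∀ t, Sfun T t = 0 ∨ Sfun T t = j + 1 := by
      intro t
      induction t with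
      | zero => exact Or.inl rfl
      | succ t ih =>
        show st (Sfun T t) (T t) = 0 ∨ st (Sfun T t) (T t) = j + 1
        rcases ih with h | h
        · rw [h]
          cases hx : T t with
          | none => exact Or.inl rfl
          | some n =>
            have hp := hmemT t n hx
            rcases hp with ⟨h0, -⟩ | ⟨-, ⟨hev, -⟩ | hodd⟩
            · exact absurd h0 (by omega)
            · left; simp [st, hev]
            · right
              have h1 : n % 2 = 1 := by omega
              have h2 : n / 2 = j := by omega
              simp [st, h1, h2]
        · rw [h]; right; simp [st]
    have hpersist : ∀ t t', t ≤ t' → Sfun T t = j + 1 → Sfun T t' = j + 1 := by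
      intro t t' htt h
      induction t', htt using Nat.le_induction with
      | base => exact h
      | succ t' htt ih =>
        show st (Sfun T t') (T t') = j + 1
        rw [ih]; simp [st]
    obtain ⟨s, hTs⟩ : ∃ s, T s = some (2 * j + 1) := by
      have : (2 * j + 1) ∈ Lang (j + 1) := Or.inr ⟨by omega, Or.inr (by omega)⟩
      rw [← hT] at this; exact this
    have hS1 : Sfun T (s + 1) = j + 1 := by
      show st (Sfun T s) (T s) = j + 1
      rcases hS s with h | h
      · rw [h, hTs]
        have h1 : (2 * j + 1) % 2 = 1 := by omega
        have h2 : (2 * j + 1) / 2 = j := by omega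
        simp [st, h1, h2]
      · rw [h]; simp [st]
    refine ⟨⟨hdom, s + 1, idx (j + 1), ?_, W_idx (j + 1), ?_⟩, ?_, ?_⟩
    · show bmsLearner hfD sfD (seg T (s + 1)) = Part.some (some (idx (j + 1)))
      rw [M_succ, hS1]
    · intro t ht h hMh _
      obtain ⟨t', rfl⟩ : ∃ t', t = t' + 1 := ⟨t - 1, by omega⟩
      rw [M_succ, hpersist (s + 1) (t' + 1) ht hS1] at hMh
      exact (Part.some_inj.mp hMh).symm
    · apply Set.Finite.subset ((Set.finite_singleton (j + 1)).insert 0)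
      rintro q ⟨t, hq⟩
      rw [sStar_sfD, foldl_seg] at hq
      have hq' : Sfun T t = q := Part.some_inj.mp hq
      rcases hS t with h | h
      · exact Or.inl (by rw [← hq', h])
      · exact Or.inr (by rw [← hq', h]; rfl)
    · intro s' t' hst es et hs ht
      simp only [outputs] at hs ht
      cases s' with
      | zero =>
        rw [M_zero] at hs
        exact absurd (Part.some_inj.mp hs) (by simp)
      | succ a =>
        cases t' with
        | zero => omega
        | succ b =>
          rw [M_succ] at hs ht
          have hes : es = idx (Sfun T (a + 1)) := (Option.some_inj.mp (Part.some_inj.mp hs)).symm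
          have het : et = idx (Sfun T (b + 1)) := (Option.some_inj.mp (Part.some_inj.mp ht)).symm
          rcases hS (b + 1) with hb | hb
          · rcases hS (a + 1) with ha | ha
            · rw [hes, het, ha, hb]
            · exact absurd (hpersist (a + 1) (b + 1) hst ha) (by rw [hb]; omega)
          · intro x hx
            refine ⟨?_, hx.2⟩
            rw [het, hb, W_idx]
            exact hT ▸ hx.2

lemma not_mem_SMon : Set.range Lang ∉ TxtBMSstarEx SMon := by
  rintro ⟨hf, sf, -, hall⟩
  have hT0 : IsTextFor (fun t => some (2 * t)) (Lang 0) := by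
    unfold IsTextFor cntT Lang P
    ext x
    simp only [Set.mem_setOf_eq, Option.some.injEq]
    constructor
    · rintro ⟨t, rfl⟩; exact Or.inl ⟨by trivial, by omega⟩
    · rintro (⟨-, hx⟩ | ⟨h0, -⟩)
      · exact ⟨x / 2, by omega⟩
      · exact absurd (by trivial) h0
  obtain ⟨⟨-, t₀, e, hout, hWe, -⟩, -, -⟩ := hall (Lang 0) ⟨0, rfl⟩ _ hT0
  have hT : IsTextFor (fun t => if t ≤ t₀ then some (2 * t) else some (2 * t₀ + 1))
      (Lang (t₀ + 1)) := by
    unfold IsTextFor cntT Lang P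
    ext x
    simp only [Set.mem_setOf_eq]
    constructor
    · rintro ⟨t, ht⟩
      by_cases h : t ≤ t₀
      · rw [if_pos h, Option.some.injEq] at ht
        exact Or.inr ⟨by omega, by omega⟩
      · rw [if_neg h, Option.some.injEq] at ht
        exact Or.inr ⟨by omega, by omega⟩
    · rintro (⟨h0, -⟩ | ⟨-, h2⟩)
      · exact absurd h0 (by omega)
      · by_cases hx2 : x = 2 * t₀ + 1
        · exact ⟨t₀ + 1, by rw [if_neg (by omega)]; exact congrArg some (by omega)⟩
        · exact ⟨x / 2, by rw [if_pos (by omega)]; exact congrArg some (by omega)⟩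
  obtain ⟨⟨-, t₁, e', hout', hWe', -⟩, -, hsmon⟩ := hall (Lang (t₀ + 1)) ⟨t₀ + 1, rfl⟩ _ hT
  have hseg : seg (fun t => if t ≤ t₀ then some (2 * t) else some (2 * t₀ + 1)) t₀ =
      seg (fun t => some (2 * t)) t₀ := by
    apply List.map_congr_left
    intro a ha
    rw [List.mem_range] at ha
    rw [if_pos (le_of_lt ha)]
  have houtT : outputs (bmsLearner hf sf) (fun t => if t ≤ t₀ then some (2 * t)
      else some (2 * t₀ + 1)) t₀ e := by
    unfold outputs
    rw [hseg]
    exact hout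
  rcases le_total t₀ t₁ with h | h
  · have hss := hsmon t₀ t₁ h e e' houtT hout'
    have h1 : (2 * t₀ + 2) ∈ W e := by rw [hWe]; exact Or.inl ⟨by trivial, by omega⟩
    have h2 := hss h1
    rw [hWe'] at h2
    rcases h2 with ⟨h0, -⟩ | ⟨-, h3⟩
    · omega
    · omega
  · have hss := hsmon t₁ t₀ h e' e hout' houtT
    have h1 : (2 * t₀ + 1) ∈ W e' := by rw [hWe']; exact Or.inr ⟨by omega, by omega⟩
    have h2 := hss h1
    rw [hWe] at h2
    rcases h2 with ⟨-, h3⟩ | ⟨h0, -⟩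
    · omega
    · omega

end BMSLearning

namespace BMSLearning

/-- Strong monotonicity is properly more restrictive than monotonicity
for bounded memory states learning with finitely many states:
`[TxtBMS*SMonEx] ⊊ [TxtBMS*MonEx]`. -/
theorem txtBMSstar_SMon_ssubset_Mon : TxtBMSstarEx SMon ⊂ TxtBMSstarEx Mon := by
  rw [Set.ssubset_def]
  constructor
  · rintro ℒ ⟨hf, sf, hp, hall⟩
    refine ⟨hf, sf, hp, fun L hL T hT => ?_⟩
    obtain ⟨h1, h2, h3⟩ := hall L hL T hT
    exact ⟨h1, h2, fun s t hst es et hs ht x hx => ⟨h3 s t hst es et hs ht hx.1, hx.2⟩⟩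
  · intro hsub
    exact not_mem_SMon (hsub mem_Mon)

end BMSLearning
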